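/- There exists an optimal assignment f* of weights such that for every i, the i-th closest point of P to c(f*) is assigned the i-th smallest value in the sorted multiset W₁ (the weights of W together with n−k copies of 1). -/

import Mathlib

abbrev Pt := EuclideanSpace ℝ (Fin 2)

/-- `f` is an assignment of the weights of `W` to the points of `P`: each weight of `W`
is assigned to a distinct point and the remaining points get weight `1`. -/
def IsAssignment (P : Finset Pt) (W : Multiset ℝ) (f : Pt → ℝ) : Prop :=
  Multiset.map f P.val = W + Multiset.replicate (P.card - Multiset.card W) 1

noncomputable local instance : DecidableEq Pt := Classical.decEq _

noncomputable def mkW (L : List ℝ) (l : List Pt) (p : Pt) : ℝ := L.getD (l.idxOf p) 0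

noncomputable def spts (P : Finset Pt) (c : Pt) : List Pt :=
  P.toList.mergeSort (fun a b => decide (dist a c ≤ dist b c))

lemma spts_perm (P : Finset Pt) (c : Pt) : List.Perm (spts P c) P.toList :=
  List.mergeSort_perm _ _

lemma spts_pairwise (P : Finset Pt) (c : Pt) :
    (spts P c).Pairwise (fun a b => dist a c ≤ dist b c) := by
  have h := List.pairwise_mergeSort (le := fun a b => decide (dist a c ≤ dist b c))
    (fun a b c' h1 h2 => by simp_all; linarith)
    (fun a b => by simpa using le_total _ _) P.toList
  exact h.imp (fun h => of_decide_eq_true h)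

lemma spts_rel (P : Finset Pt) (c : Pt) {i j : ℕ} (hij : i ≤ j) (hj : j < (spts P c).length) :
    dist ((spts P c)[i]'(lt_of_le_of_lt hij hj)) c ≤ dist ((spts P c)[j]) c := by
  rcases eq_or_lt_of_le hij with rfl | h
  · exact le_refl _
  · exact (List.pairwise_iff_getElem.1 (spts_pairwise P c)) i j _ hj h

lemma sorted_rel {L : List ℝ} (hLs : List.Pairwise (· ≤ ·) L) {i j : ℕ} (hij : i ≤ j)
    (hj : j < L.length) : L[i]'(lt_of_le_of_lt hij hj) ≤ L[j] := by
  rcases eq_or_lt_of_le hij with rfl | h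
  · exact le_refl _
  · exact (List.pairwise_iff_getElem.1 hLs) i j _ hj h

lemma indexOf_getElem' {l : List Pt} (hnd : l.Nodup) {i : ℕ} (hi : i < l.length) :
    l.idxOf l[i] = i := by
  have hmem : l[i] ∈ l := List.getElem_mem _
  have h3 : l.idxOf l[i] < l.length := List.idxOf_lt_length_iff.2 hmem
  have h4 : l[l.idxOf l[i]] = l[i] := List.getElem_idxOf h3
  exact (List.Nodup.getElem_inj_iff hnd).1 h4

lemma map_mkW {L : List ℝ} {l : List Pt} (hnd : l.Nodup) (hl : l.length = L.length) :
    l.map (mkW L l) = L := by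
  apply List.ext_getElem (by simpa using hl)
  intro i h1 h2
  simp only [List.getElem_map, mkW]
  rw [indexOf_getElem' hnd (by simpa using h1), List.getD_eq_getElem _ _ (by omega)]

lemma mkW_assign {P : Finset Pt} {L : List ℝ} {l : List Pt} (hl : List.Perm l P.toList)
    (hlen : L.length = P.card) : Multiset.map (mkW L l) P.val = (L : Multiset ℝ) := by
  have hnd : l.Nodup := hl.nodup_iff.2 P.nodup_toList
  have hlen' : l.length = L.length := by rw [hl.length_eq, Finset.length_toList, hlen]
  have h1 : P.val = (l : Multiset Pt) := by
    rw [← Finset.coe_toList P]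
    exact (Multiset.coe_eq_coe.2 hl).symm
  rw [h1]
  have : Multiset.map (mkW L l) (l : Multiset Pt) = ((l.map (mkW L l) : List ℝ) : Multiset ℝ) := by
    simp [Multiset.map_coe]
  rw [this, map_mkW hnd hlen']

lemma key_lemma (P : Finset Pt) (hP : P.Nonempty) (c : Pt) (L : List ℝ)
    (hLs : List.Pairwise (· ≤ ·) L) (hLpos : ∀ a ∈ L, (0:ℝ) < a) (hlen : L.length = P.card)
    (f : Pt → ℝ) (hf : Multiset.map f P.val = (L : Multiset ℝ))
    (p : Pt) (hp : p ∈ P) :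
    dist p c / mkW L (spts P c) p ≤ P.sup' hP (fun q => dist q c / f q) := by
  classical
  set l := spts P c with hldef
  have hperm := spts_perm P c
  have hnd : l.Nodup := hperm.nodup_iff.2 P.nodup_toList
  have hlenl : l.length = L.length := by rw [hperm.length_eq, Finset.length_toList, hlen]
  have hpl : p ∈ l := hperm.mem_iff.2 (Finset.mem_toList.2 hp)
  set i := l.idxOf p with hidef
  have hil : i < l.length := List.idxOf_lt_length_iff.2 hpl
  have hiL : i < L.length := by omega
  have hli : l[i]'hil = p := List.getElem_idxOf hil
  have hfp : mkW L l p = L[i]'hiL := by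
    rw [mkW, ← hidef, List.getD_eq_getElem _ _ hiL]
  have hfpos : ∀ q ∈ P, 0 < f q := by
    intro q hq
    have h1 : f q ∈ Multiset.map f P.val := Multiset.mem_map_of_mem f hq
    rw [hf] at h1
    exact hLpos _ (by exact_mod_cast h1)
  have hS1 : i + 1 ≤ (P.filter (fun q => f q ≤ L[i]'hiL)).card := by
    have h1 : (P.filter (fun q => f q ≤ L[i]'hiL)).card
        = Multiset.card (Multiset.filter (fun x => x ≤ L[i]'hiL) (Multiset.map f P.val)) := by
      rw [Multiset.filter_map, Multiset.card_map]
      rfl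
    have h2 : Multiset.card (Multiset.filter (fun x => x ≤ L[i]'hiL) (L : Multiset ℝ))
        = (L.filter (fun x => decide (x ≤ L[i]'hiL))).length := by
      simp [Multiset.filter_coe]
    have h3 : i + 1 ≤ (L.filter (fun x => decide (x ≤ L[i]'hiL))).length := by
      have ht : (L.take (i+1)).filter (fun x => decide (x ≤ L[i]'hiL)) = L.take (i+1) := by
        apply List.filter_eq_self.2
        intro a ha
        obtain ⟨j, hj, rfl⟩ := List.mem_iff_getElem.1 ha
        have hj' : j < i + 1 := by
          have : (L.take (i+1)).length = min (i+1) L.length := List.length_take; omega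
        simp only [List.getElem_take]
        exact decide_eq_true (sorted_rel hLs (by omega) hiL)
      calc i + 1 = (L.take (i+1)).length := by rw [List.length_take]; omega
      _ = ((L.take (i+1)).filter (fun x => decide (x ≤ L[i]'hiL))).length := by rw [ht]
      _ ≤ _ := ((List.take_sublist _ _).filter _).length_le
    rw [h1, hf, h2]
    exact h3
  have hS2 : (P.filter (fun q => dist q c < dist p c)).card ≤ i := by
    have h1 : (P.filter (fun q => dist q c < dist p c)).card ≤ (Finset.range i).card := by
      apply Finset.card_le_card_of_injOn (fun q => l.idxOf q)
      · intro q hq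
        simp only [Finset.mem_coe, Finset.mem_filter] at hq
        have hql : q ∈ l := hperm.mem_iff.2 (Finset.mem_toList.2 hq.1)
        have hj : l.idxOf q < l.length := List.idxOf_lt_length_iff.2 hql
        have hlq : l[l.idxOf q]'hj = q := List.getElem_idxOf hj
        simp only [Finset.mem_coe, Finset.mem_range]
        by_contra hcon
        push_neg at hcon
        have hrel : dist (l[i]'hil) c ≤ dist (l[List.idxOf q l]'hj) c :=
          spts_rel P c hcon hj
        rw [hli, hlq] at hrel
        linarith [hq.2]
      · intro q1 h1 q2 h2 he
        have hq1l : q1 ∈ l := hperm.mem_iff.2 (Finset.mem_toList.2 (Finset.mem_filter.1 (by exact_mod_cast h1)).1)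
        have hq2l : q2 ∈ l := hperm.mem_iff.2 (Finset.mem_toList.2 (Finset.mem_filter.1 (by exact_mod_cast h2)).1)
        have e1 : l[l.idxOf q1]'(List.idxOf_lt_length_iff.2 hq1l) = q1 := List.getElem_idxOf _
        have e2 : l[l.idxOf q2]'(List.idxOf_lt_length_iff.2 hq2l) = q2 := List.getElem_idxOf _
        rw [← e1, ← e2]
        simp only [he]
    simpa using h1
  have hns : ¬ (P.filter (fun q => f q ≤ L[i]'hiL)) ⊆ (P.filter (fun q => dist q c < dist p c)) := by
    intro hsub
    have := Finset.card_le_card hsub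
    omega
  obtain ⟨q, hq1, hq2⟩ := Finset.not_subset.1 hns
  simp only [Finset.mem_filter] at hq1 hq2
  push_neg at hq2
  have hq2' : dist p c ≤ dist q c := hq2 hq1.1
  rw [hfp]
  calc dist p c / L[i]'hiL ≤ dist q c / f q :=
        div_le_div₀ dist_nonneg hq2' (hfpos q hq1.1) hq1.2
  _ ≤ _ := Finset.le_sup' (fun q => dist q c / f q) hq1.1

lemma rank_lemma (P : Finset Pt) (c : Pt)
    (hinj : Set.InjOn (fun p => dist p c) (P : Set Pt)) (p : Pt) (hp : p ∈ P) :
    (P.filter (fun q => dist q c ≤ dist p c)).card = (spts P c).idxOf p + 1 := by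
  classical
  set l := spts P c with hldef
  have hperm := spts_perm P c
  have hnd : l.Nodup := hperm.nodup_iff.2 P.nodup_toList
  have hpl : p ∈ l := hperm.mem_iff.2 (Finset.mem_toList.2 hp)
  set i := l.idxOf p with hidef
  have hil : i < l.length := List.idxOf_lt_length_iff.2 hpl
  have hli : l[i]'hil = p := List.getElem_idxOf hil
  have hmemP : ∀ {m : ℕ} (hm : m < l.length), l[m] ∈ P := fun {m} hm =>
    Finset.mem_toList.1 (hperm.mem_iff.1 (List.getElem_mem hm))
  have hcard : (P.filter (fun q => dist q c ≤ dist p c)).card = (Finset.range (i+1)).card := by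
    apply Finset.card_nbij' (i := fun q => l.idxOf q) (j := fun m => l.getD m p)
    · intro q hq
      simp only [Finset.mem_coe, Finset.mem_filter] at hq
      have hql : q ∈ l := hperm.mem_iff.2 (Finset.mem_toList.2 hq.1)
      have hj : l.idxOf q < l.length := List.idxOf_lt_length_iff.2 hql
      have hlq : l[l.idxOf q]'hj = q := List.getElem_idxOf hj
      simp only [Finset.mem_coe, Finset.mem_range]
      by_contra hcon
      push_neg at hcon
      have hcon' : i ≤ l.idxOf q := by omega
      have hrel : dist (l[i]'hil) c ≤ dist (l[l.idxOf q]'hj) c := spts_rel P c hcon' hj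
      rw [hli, hlq] at hrel
      have heq : dist q c = dist p c := le_antisymm hq.2 hrel
      have hqp : q = p := hinj (by exact_mod_cast hq.1) (by exact_mod_cast hp) heq
      rw [hqp, ← hidef] at hcon
      omega
    · intro m hm
      simp only [Finset.mem_coe, Finset.mem_range] at hm
      have hm' : m < l.length := by omega
      have hgd : l.getD m p = l[m] := List.getD_eq_getElem _ _ hm'
      beta_reduce
      rw [hgd]
      simp only [Finset.mem_coe, Finset.mem_filter]
      refine ⟨hmemP hm', ?_⟩
      have hrel : dist (l[m]'hm') c ≤ dist (l[i]'hil) c := spts_rel P c (by omega) hil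
      rwa [hli] at hrel
    · intro q hq
      simp only [Finset.mem_coe, Finset.mem_filter] at hq
      have hql : q ∈ l := hperm.mem_iff.2 (Finset.mem_toList.2 hq.1)
      have hj : l.idxOf q < l.length := List.idxOf_lt_length_iff.2 hql
      beta_reduce
      rw [List.getD_eq_getElem _ _ hj]
      exact List.getElem_idxOf hj
    · intro m hm
      simp only [Finset.mem_coe, Finset.mem_range] at hm
      have hm' : m < l.length := by omega
      beta_reduce
      rw [List.getD_eq_getElem _ _ hm']
      exact indexOf_getElem' hnd hm'
  rw [hcard, Finset.card_range]


theorem stmt_9 (P : Finset Pt) (hP : P.Nonempty) (W : Multiset ℝ)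
    (hk : Multiset.card W ≤ P.card) (hWpos : ∀ w ∈ W, (0:ℝ) < w) :
    ∃ (fs : Pt → ℝ) (cs : Pt), IsAssignment P W fs ∧
      -- cs is the weighted center of fs
      (∀ x : Pt, P.sup' hP (fun p => dist p cs / fs p) ≤
        P.sup' hP (fun p => dist p x / fs p)) ∧
      -- fs is optimal: its covering radius is at most that of any assignment
      (∀ (f : Pt → ℝ) (c : Pt), IsAssignment P W f →
        P.sup' hP (fun p => dist p cs / fs p) ≤ P.sup' hP (fun p => dist p c / f p)) ∧
      -- if distances to cs are pairwise distinct, the i-th closest point of P to cs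
      -- gets the i-th smallest weight of W₁ = W + (n-k) copies of 1
      (Set.InjOn (fun p => dist p cs) (P : Set Pt) → ∀ p ∈ P,
        fs p = ((W + Multiset.replicate (P.card - Multiset.card W) 1).sort (· ≤ ·)).getD
          ((P.filter (fun q => dist q cs ≤ dist p cs)).card - 1) 0) := by
  classical
  set W₁ : Multiset ℝ := W + Multiset.replicate (P.card - Multiset.card W) 1 with hW₁
  set L : List ℝ := W₁.sort (· ≤ ·) with hLdef
  have hLcoe : (L : Multiset ℝ) = W₁ := Multiset.sort_eq _ _
  have hLlen : L.length = P.card := by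
    rw [hLdef, Multiset.length_sort, hW₁]
    simp only [Multiset.card_add, Multiset.card_replicate]
    omega
  have hLs : List.Pairwise (· ≤ ·) L := Multiset.pairwise_sort _ _
  have hLpos : ∀ a ∈ L, (0:ℝ) < a := by
    intro a ha
    have ha' : a ∈ W₁ := by rw [← hLcoe]; exact_mod_cast ha
    rw [hW₁] at ha'
    rcases Multiset.mem_add.1 ha' with h | h
    · exact hWpos a h
    · rw [Multiset.eq_of_mem_replicate h]; norm_num
  set A : Finset (Pt → ℝ) := (P.toList.permutations).toFinset.image (mkW L) with hA
  have hAmem : ∀ l : List Pt, List.Perm l P.toList → mkW L l ∈ A := by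
    intro l hl
    rw [hA]
    exact Finset.mem_image.2 ⟨l, List.mem_toFinset.2 (List.mem_permutations.2 hl), rfl⟩
  have hAassign : ∀ w ∈ A, Multiset.map w P.val = W₁ := by
    intro w hw
    rw [hA] at hw
    obtain ⟨l, hl, rfl⟩ := Finset.mem_image.1 hw
    rw [mkW_assign (List.mem_permutations.1 (List.mem_toFinset.1 hl)) hLlen, hLcoe]
  have hAne : A.Nonempty := ⟨_, hAmem P.toList (List.Perm.refl _)⟩
  set R : (Pt → ℝ) → Pt → ℝ := fun w c => P.sup' hP (fun p => dist p c / w p) with hR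
  set g : Pt → ℝ := fun c => A.inf' hAne (fun w => R w c) with hg
  have hkey : ∀ (c : Pt) (f : Pt → ℝ), Multiset.map f P.val = W₁ →
      R (mkW L (spts P c)) c ≤ R f c := by
    intro c f hf
    apply Finset.sup'_le
    intro p hp
    exact key_lemma P hP c L hLs hLpos hLlen f (by rw [hf, hLcoe]) p hp
  have hg_le : ∀ (c : Pt) (f : Pt → ℝ), Multiset.map f P.val = W₁ → g c ≤ R f c := by
    intro c f hf
    calc g c ≤ R (mkW L (spts P c)) c := Finset.inf'_le _ (hAmem _ (spts_perm P c))
    _ ≤ R f c := hkey c f hf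
  have hg_eq : ∀ c : Pt, g c = R (mkW L (spts P c)) c := by
    intro c
    apply le_antisymm (Finset.inf'_le _ (hAmem _ (spts_perm P c)))
    apply Finset.le_inf'
    intro w hw
    exact hkey c w (hAassign w hw)
  have hwA : ∀ w ∈ A, ∀ p ∈ P, w p ∈ L := by
    intro w hw p hp
    have h1 : w p ∈ Multiset.map w P.val := Multiset.mem_map_of_mem w hp
    rw [hAassign w hw, ← hLcoe] at h1
    exact_mod_cast h1
  have hPcopy := hP
  obtain ⟨p0, hp0⟩ := hPcopy
  set M : ℝ := L.sum with hM
  have hMle : ∀ a ∈ L, a ≤ M := fun a ha =>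
    List.single_le_sum (fun b hb => le_of_lt (hLpos b hb)) a ha
  have hL0 : 0 < L.length := by rw [hLlen]; exact Finset.card_pos.2 ⟨p0, hp0⟩
  have hMpos : 0 < M :=
    lt_of_lt_of_le (hLpos L[0] (List.getElem_mem hL0)) (hMle _ (List.getElem_mem hL0))
  have hgcont : Continuous g := by
    rw [hg]
    apply Continuous.finset_inf'_apply hAne
    intro w hw
    apply Continuous.finset_sup'_apply hP
    intro p hp
    exact (Continuous.dist continuous_const continuous_id).div_const _
  have hlb : ∀ c : Pt, dist p0 c / M ≤ g c := by
    intro c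
    apply Finset.le_inf'
    intro w hw
    have h1 : 0 < w p0 := hLpos _ (hwA w hw p0 hp0)
    have h2 : w p0 ≤ M := hMle _ (hwA w hw p0 hp0)
    calc dist p0 c / M ≤ dist p0 c / w p0 := by gcongr
    _ ≤ R w c := Finset.le_sup' (fun p => dist p c / w p) hp0
  set v : ℝ := g p0 with hv
  have hv0 : 0 ≤ v := by
    have h := hlb p0
    rw [dist_self, zero_div] at h
    rw [hv]; exact h
  set r : ℝ := (v + 1) * M with hr
  have hr0 : 0 ≤ r := by positivity
  have hp0K : p0 ∈ Metric.closedBall p0 r := Metric.mem_closedBall_self hr0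
  obtain ⟨cs, hcsK, hcs⟩ :=
    (isCompact_closedBall p0 r).exists_isMinOn ⟨p0, hp0K⟩ hgcont.continuousOn
  have hglobal : ∀ c : Pt, g cs ≤ g c := by
    intro c
    by_cases hc : c ∈ Metric.closedBall p0 r
    · exact (isMinOn_iff.1 hcs) c hc
    · have h1 : r < dist p0 c := by
        rw [Metric.mem_closedBall, dist_comm] at hc
        linarith [not_le.1 hc]
      have h1' : (v + 1) * M < dist p0 c := hr ▸ h1
      have h2 : v < g c := by
        have h3 : v < dist p0 c / M := by
          rw [lt_div_iff₀ hMpos]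
          nlinarith
        linarith [hlb c]
      calc g cs ≤ g p0 := (isMinOn_iff.1 hcs) p0 hp0K
      _ = v := hv.symm
      _ ≤ g c := le_of_lt h2
  refine ⟨mkW L (spts P cs), cs, ?_, ?_, ?_, ?_⟩
  · show Multiset.map _ P.val = W₁
    rw [mkW_assign (spts_perm P cs) hLlen, hLcoe]
  · intro x
    calc P.sup' hP (fun p => dist p cs / mkW L (spts P cs) p) = g cs := (hg_eq cs).symm
    _ ≤ g x := hglobal x
    _ ≤ _ := Finset.inf'_le _ (hAmem _ (spts_perm P cs))
  · intro f c hf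
    calc P.sup' hP (fun p => dist p cs / mkW L (spts P cs) p) = g cs := (hg_eq cs).symm
    _ ≤ g c := hglobal c
    _ ≤ _ := hg_le c f hf
  · intro hinj p hp
    have h1 := rank_lemma P cs hinj p hp
    rw [h1]
    simp only [Nat.add_sub_cancel]
    rfl
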